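/- Third-order differential equation: for every n ∈ ℕ the polynomial P_n(x) := P_n(x;a,b;c,d) satisfies, for all x, x²(1−x) P_n'''(x) − x φ(x) P_n''(x) + ψ_n(x) P_n'(x) + n λ_n P_n(x) = 0, where φ(x) := (c+d+2)x − (a+b+1), λ_n := (c+⌊n/2⌋)(d+⌊(n−1)/2⌋), and ψ_n(x) := ((n−1)(c+d+n) − λ_n) x + ab. -/
import Mathlib

open Polynomial Finset

/-- Pochhammer symbol `(z)_n = z (z+1) ⋯ (z+n-1)`. -/
noncomputable def poch (z : ℝ) (n : ℕ) : ℝ := ∏ i ∈ Finset.range n, (z + i)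

/-- The type II multiple orthogonal polynomial of degree `n` on the step line. -/
noncomputable def P (a b c d : ℝ) (n : ℕ) (x : ℝ) : ℝ :=
  ∑ j ∈ Finset.range (n + 1),
    (n.choose j : ℝ) * (-1 : ℝ) ^ j *
      (poch (a + n - j) j * poch (b + n - j) j) /
      (poch (c + (n / 2 : ℕ) + n - j) j * poch (d + ((n - 1) / 2 : ℕ) + n - j) j) *
      x ^ (n - j)

lemma poch_pos {z : ℝ} (hz : 0 < z) (k : ℕ) : 0 < poch z k :=
  Finset.prod_pos (fun i _ => by positivity)

lemma poch_succ (z : ℝ) (k : ℕ) : poch z (k + 1) = z * poch (z + 1) k := by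
  unfold poch
  rw [Finset.prod_range_succ']
  simp only [Nat.cast_zero, add_zero, Nat.cast_add, Nat.cast_one]
  rw [mul_comm]
  congr 1
  exact Finset.prod_congr rfl fun i _ => by ring

noncomputable def Acoef (a b c d : ℝ) (n m : ℕ) : ℝ :=
  if m ≤ n then
    (n.choose (n - m) : ℝ) * (-1 : ℝ) ^ (n - m) *
      (poch (a + m) (n - m) * poch (b + m) (n - m)) /
      (poch (c + (n / 2 : ℕ) + m) (n - m) * poch (d + ((n - 1) / 2 : ℕ) + m) (n - m))
  else 0

noncomputable def Qpoly (a b c d : ℝ) (n : ℕ) : Polynomial ℝ :=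
  ∑ m ∈ Finset.range (n + 1), Polynomial.C (Acoef a b c d n m) * Polynomial.X ^ m

lemma Qpoly_coeff (a b c d : ℝ) (n k : ℕ) : (Qpoly a b c d n).coeff k = Acoef a b c d n k := by
  unfold Qpoly
  rw [Polynomial.finset_sum_coeff]
  simp only [Polynomial.coeff_C_mul, Polynomial.coeff_X_pow, mul_ite, mul_one, mul_zero]
  rw [Finset.sum_ite_eq (Finset.range (n+1)) k (fun m => Acoef a b c d n m)]
  by_cases h : k ≤ n
  · rw [if_pos (Finset.mem_range.mpr (by omega))]
  · rw [if_neg (by simp [Finset.mem_range]; omega), Acoef, if_neg h]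

lemma P_eq (a b c d : ℝ) (n : ℕ) :
    P a b c d n = fun x => (Qpoly a b c d n).eval x := by
  funext x
  unfold P Qpoly
  rw [Polynomial.eval_finset_sum]
  simp only [Polynomial.eval_mul, Polynomial.eval_C, Polynomial.eval_pow, Polynomial.eval_X]
  rw [← Finset.sum_range_reflect]
  refine Finset.sum_congr rfl fun j hj => ?_
  have hj' : j ≤ n := by simpa [Nat.lt_succ_iff] using hj
  have h1 : n + 1 - 1 - j = n - j := by omega
  rw [h1, Acoef, if_pos hj', Nat.sub_sub_self hj', Nat.cast_sub hj']
  ring_nf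

set_option maxRecDepth 40000 in
set_option maxHeartbeats 2000000 in
lemma rec_lemma (a b c d : ℝ) (ha : 0 < a) (hb : 0 < b) (hc : 0 < c) (hd : 0 < d)
    (n m : ℕ) :
    ((m : ℝ) + 1) * ((m : ℝ) + a) * ((m : ℝ) + b) * Acoef a b c d n (m + 1)
      + ((n : ℝ) - (m : ℝ)) * ((m : ℝ) + (c + ((n / 2 : ℕ) : ℝ)))
        * ((m : ℝ) + (d + (((n - 1) / 2 : ℕ) : ℝ))) * Acoef a b c d n m = 0 := by
  rcases lt_trichotomy m n with hmn | rfl | hmn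
  · -- main case m < n
    obtain ⟨k, hk⟩ : ∃ k, n - m = k + 1 := ⟨n - m - 1, by omega⟩
    have hm1 : m + 1 ≤ n := by omega
    have hnm1 : n - (m + 1) = k := by omega
    rw [Acoef, Acoef, if_pos hm1, if_pos (by omega : m ≤ n), hnm1, hk]
    have hcast : ((n : ℝ) - (m : ℝ)) = (k : ℝ) + 1 := by
      have : (n : ℕ) = m + k + 1 := by omega
      rw [this]; push_cast; ring
    rw [hcast]
    have hch : ((n.choose (k+1)) : ℝ) * ((k : ℝ) + 1) = ((n.choose k) : ℝ) * ((m : ℝ) + 1) := by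
      have := Nat.choose_succ_right_eq n k
      have hnk : n - k = m + 1 := by omega
      rw [hnk] at this
      exact_mod_cast this
    rw [poch_succ (a + m), poch_succ (b + m), poch_succ (c + ↑(n/2) + m), poch_succ (d + ↑((n-1)/2) + m)]
    have e1 : a + (m:ℝ) + 1 = a + ((m:ℕ)+1 : ℕ) := by push_cast; ring
    have e2 : b + (m:ℝ) + 1 = b + ((m:ℕ)+1 : ℕ) := by push_cast; ring
    have e3 : c + ↑(n/2) + (m:ℝ) + 1 = c + ↑(n/2) + ((m:ℕ)+1 : ℕ) := by push_cast; ring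
    have e4 : d + ↑((n-1)/2) + (m:ℝ) + 1 = d + ↑((n-1)/2) + ((m:ℕ)+1 : ℕ) := by push_cast; ring
    rw [e1, e2, e3, e4]
    have pa : (0:ℝ) < poch (a + ((m:ℕ)+1 : ℕ)) k := poch_pos (by push_cast; positivity) k
    have pb : (0:ℝ) < poch (b + ((m:ℕ)+1 : ℕ)) k := poch_pos (by push_cast; positivity) k
    have pc' : (0:ℝ) < poch (c + ↑(n/2) + ((m:ℕ)+1 : ℕ)) k := poch_pos (by push_cast; positivity) k
    have pd' : (0:ℝ) < poch (d + ↑((n-1)/2) + ((m:ℕ)+1 : ℕ)) k := poch_pos (by push_cast; positivity) k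
    have hc1 : (0:ℝ) < c + ↑(n/2) + m := by positivity
    have hd1 : (0:ℝ) < d + ↑((n-1)/2) + m := by positivity
    rw [pow_succ]
    set PA := poch (a + ((m:ℕ)+1 : ℕ)) k with hPA
    set PB := poch (b + ((m:ℕ)+1 : ℕ)) k with hPB
    set PC := poch (c + ↑(n/2) + ((m:ℕ)+1 : ℕ)) k with hPC
    set PD := poch (d + ↑((n-1)/2) + ((m:ℕ)+1 : ℕ)) k with hPD
    set sg := (-1:ℝ)^k with hsg
    set ch1 := ((n.choose k : ℕ) : ℝ) with hch1
    set ch2 := ((n.choose (k+1) : ℕ) : ℝ) with hch2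
    have hch2' : ch2 = ch1 * ((m:ℝ)+1) / ((k:ℝ)+1) := by
      rw [eq_div_iff (by positivity : ((k:ℝ)+1) ≠ 0)]
      linear_combination hch
    rw [hch2']
    field_simp
    ring
  · -- m = n
    rw [Acoef, if_neg (by omega : ¬ (m + 1 ≤ m))]
    ring
  · -- m > n
    rw [Acoef, Acoef, if_neg (by omega : ¬ (m + 1 ≤ n)), if_neg (by omega : ¬ (m ≤ n))]
    ring

lemma corr_lemma (a b c d : ℝ) (n m : ℕ) :
    ((n : ℝ) - (m : ℝ)) * (m : ℝ)
      * ((n : ℝ) - 1 - (((n / 2 : ℕ) : ℝ) + (((n - 1) / 2 : ℕ) : ℝ)))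
      * Acoef a b c d n m = 0 := by
  rcases Nat.eq_zero_or_pos m with hm | hm
  · subst hm; simp
  by_cases hmn : m ≤ n
  · have h1 : n / 2 + (n - 1) / 2 = n - 1 := by omega
    have h2 : (((n / 2 : ℕ) : ℝ) + (((n - 1) / 2 : ℕ) : ℝ)) = (n : ℝ) - 1 := by
      rw [← Nat.cast_add, h1, Nat.cast_sub (by omega)]; norm_num
    rw [h2]
    ring_nf
  · rw [Acoef, if_neg hmn]; ring

/-- Third-order differential equation satisfied by the type II polynomials:
`x²(1−x) P_n''' − x φ(x) P_n'' + ψ_n(x) P_n' + n λ_n P_n = 0` with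
`φ(x) = (c+d+2)x − (a+b+1)`, `λ_n = (c+⌊n/2⌋)(d+⌊(n−1)/2⌋)` and
`ψ_n(x) = ((n−1)(c+d+n) − λ_n)x + ab`. -/
theorem third_order_ode_typeII (a b c d : ℝ)
    (ha : 0 < a) (hb : 0 < b) (hc : 0 < c) (hd : 0 < d)
    (hcd : max a b < min c d) :
    ∀ (n : ℕ) (x : ℝ),
      x ^ 2 * (1 - x) * deriv (deriv (deriv (P a b c d n))) x -
        x * ((c + d + 2) * x - (a + b + 1)) * deriv (deriv (P a b c d n)) x +
        ((((n : ℝ) - 1) * (c + d + n) -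
            (c + (n / 2 : ℕ)) * (d + ((n - 1) / 2 : ℕ))) * x + a * b) *
          deriv (P a b c d n) x +
        (n : ℝ) * ((c + (n / 2 : ℕ)) * (d + ((n - 1) / 2 : ℕ))) * P a b c d n x = 0 := by
  intro n x
  set Q := Qpoly a b c d n with hQ
  have hP := P_eq a b c d n
  have h1 : deriv (P a b c d n) = fun y => (Polynomial.derivative Q).eval y := by
    rw [hP]; funext y; exact Polynomial.deriv _
  have h2 : deriv (deriv (P a b c d n)) =
      fun y => (Polynomial.derivative (Polynomial.derivative Q)).eval y := by
    rw [h1]; funext y; exact Polynomial.deriv _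
  have h3 : deriv (deriv (deriv (P a b c d n))) =
      fun y => (Polynomial.derivative (Polynomial.derivative (Polynomial.derivative Q))).eval y := by
    rw [h2]; funext y; exact Polynomial.deriv _
  rw [h3, h2, h1, hP]
  set lam : ℝ := (c + (n / 2 : ℕ)) * (d + ((n - 1) / 2 : ℕ)) with hlam
  set K : ℝ := ((n : ℝ) - 1) * (c + d + n) - lam with hK
  set Q1 := Polynomial.derivative Q
  set Q2 := Polynomial.derivative Q1
  set Q3 := Polynomial.derivative Q2
  have hR : Q3 * Polynomial.X ^ 2 - Q3 * Polynomial.X ^ 3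
      - Polynomial.C (c + d + 2) * Q2 * Polynomial.X ^ 2
      + Polynomial.C (a + b + 1) * Q2 * Polynomial.X ^ 1
      + Polynomial.C K * Q1 * Polynomial.X ^ 1
      + Polynomial.C (a * b) * Q1
      + Polynomial.C ((n : ℝ) * lam) * Q = 0 := by
    apply Polynomial.ext
    intro m
    have hA : ∀ k, Q.coeff k = Acoef a b c d n k := Qpoly_coeff a b c d n
    simp only [Polynomial.coeff_add, Polynomial.coeff_sub, Polynomial.coeff_zero,
      Polynomial.coeff_mul_X_pow', Polynomial.coeff_C_mul, Q1, Q2, Q3,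
      Polynomial.coeff_derivative, hA]
    match m with
    | 0 =>
      norm_num
      simp only [hlam]
      linear_combination rec_lemma a b c d ha hb hc hd n 0
    | 1 =>
      norm_num
      simp only [hK, hlam]
      linear_combination rec_lemma a b c d ha hb hc hd n 1 + corr_lemma a b c d n 1
    | 2 =>
      norm_num
      simp only [hK, hlam]
      linear_combination rec_lemma a b c d ha hb hc hd n 2 + corr_lemma a b c d n 2
    | (p+3) =>
      rw [if_pos (by omega : 2 ≤ p+3), if_pos (by omega : 3 ≤ p+3),
        if_pos (by omega : 1 ≤ p+3), show p+3-2 = p+1 by omega, show p+3-3 = p by omega,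
        show p+3-1 = p+2 by omega]
      simp only [hK, hlam]
      have hrec := rec_lemma a b c d ha hb hc hd n (p+3)
      have hcorr := corr_lemma a b c d n (p+3)
      push_cast at hrec hcorr ⊢
      linear_combination hrec + hcorr
  have hx := congrArg (Polynomial.eval x) hR
  simp only [Polynomial.eval_add, Polynomial.eval_sub, Polynomial.eval_mul, Polynomial.eval_pow,
    Polynomial.eval_X, Polynomial.eval_C, Polynomial.eval_zero] at hx
  linear_combination hx
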